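/- Define w:[0,1]²→ℝ by w(s,t) = 1 − exp(−1/(t(1−s))) if (s,t) ∈ [0,1)×(0,1], and w(s,t) = 1 otherwise. Then w is continuous on [0,1]², and with b the floor (integer part) function on [0,1] and s_n = 1 − 1/n one has lim_{n→∞} s_n = 1 while lim_{n→∞} ∫₀¹ b(w(s_n,t)) dt = 0 ≠ 1 = ∫₀¹ b(w(1,t)) dt. Hence the almost-sure continuity of the map (s,x) ↦ ∫₀¹ b(t, x + W_{s,t}) dt along the Brownian sheet fails if the Brownian sheet is replaced by an arbitrary continuous two-parameter function. -/

import Mathlib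

open MeasureTheory Filter Set

noncomputable section

/-- The function `w(s,t) = 1 − exp(−1/(t(1−s)))` for `(s,t) ∈ [0,1)×(0,1]` and
`w(s,t) = 1` otherwise. -/
noncomputable def wfun (s t : ℝ) : ℝ :=
  if s < 1 ∧ 0 < t then 1 - Real.exp (-(1 / (t * (1 - s)))) else 1

lemma wfun_floor_zero {s t : ℝ} (hs : s < 1) (ht : 0 < t) : ⌊wfun s t⌋ = 0 := by
  have hpos : 0 < t * (1 - s) := mul_pos ht (by linarith)
  have h1 : 0 < 1 / (t * (1 - s)) := by positivity
  rw [wfun, if_pos ⟨hs, ht⟩, Int.floor_eq_zero_iff, Set.mem_Ico]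
  have h2 : Real.exp (-(1 / (t * (1 - s)))) ≤ 1 := Real.exp_le_one_iff.2 (by linarith)
  have h3 := Real.exp_pos (-(1 / (t * (1 - s))))
  constructor
  · linarith
  · linarith

lemma wfun_dist_le {s t : ℝ} (hs : s < 1) (ht : 0 < t) :
    |wfun s t - 1| = Real.exp (-(1 / (t * (1 - s)))) := by
  rw [wfun, if_pos ⟨hs, ht⟩]
  rw [abs_of_nonpos (by have := Real.exp_pos (-(1 / (t * (1 - s)))); linarith)]
  ring

/-- The function `w` is continuous on `[0,1]²`; with `b = ⌊·⌋` the
integer part function and `s_n = 1 − 1/n`, one has `s_n → 1` while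
`lim_{n→∞} ∫₀¹ ⌊w(s_n,t)⌋ dt = 0 ≠ 1 = ∫₀¹ ⌊w(1,t)⌋ dt`.  Hence the almost-sure
continuity of `(s,x) ↦ ∫₀¹ b(t,x+W_{s,t}) dt` along Brownian sheet paths fails for an
arbitrary continuous two-parameter function in place of the sheet. -/
theorem counterexample_continuity_fails :
    ContinuousOn (fun p : ℝ × ℝ => wfun p.1 p.2) (Set.Icc 0 1 ×ˢ Set.Icc 0 1) ∧
    Tendsto (fun n : ℕ => 1 - 1 / (n : ℝ)) atTop (nhds 1) ∧
    Tendsto (fun n : ℕ => ∫ t in (0:ℝ)..1, (⌊wfun (1 - 1 / (n : ℝ)) t⌋ : ℝ))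
      atTop (nhds 0) ∧
    (∫ t in (0:ℝ)..1, (⌊wfun 1 t⌋ : ℝ)) = 1 ∧
    (0 : ℝ) ≠ 1 := by
  refine ⟨?_, ?_, ?_, ?_, by norm_num⟩
  · -- continuity
    intro p hp
    simp only [Set.mem_prod, Set.mem_Icc] at hp
    by_cases h : p.1 < 1 ∧ 0 < p.2
    · -- interior case: continuous at p
      apply ContinuousAt.continuousWithinAt
      have hopen : IsOpen {q : ℝ × ℝ | q.1 < 1 ∧ 0 < q.2} := by
        exact (isOpen_lt continuous_fst continuous_const).inter
          (isOpen_lt continuous_const continuous_snd)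
      have hne : p.2 * (1 - p.1) ≠ 0 := by
        have : 0 < p.2 * (1 - p.1) := mul_pos h.2 (by linarith [h.1])
        exact ne_of_gt this
      have hc : ContinuousAt (fun q : ℝ × ℝ => 1 - Real.exp (-(1 / (q.2 * (1 - q.1))))) p := by
        apply ContinuousAt.sub continuousAt_const
        apply Real.continuous_exp.continuousAt.comp
        apply ContinuousAt.neg
        exact ContinuousAt.div continuousAt_const
          (continuous_snd.mul (continuous_const.sub continuous_fst)).continuousAt hne
      apply hc.congr
      filter_upwards [hopen.mem_nhds h] with q hq
      rw [wfun, if_pos hq]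
    · -- boundary case: p.1 = 1 or p.2 = 0, wfun p = 1
      have hval : wfun p.1 p.2 = 1 := by rw [wfun, if_neg h]
      rw [Metric.continuousWithinAt_iff]
      intro ε hε
      set M : ℝ := max 1 (Real.log (2 / ε)) with hM
      have hMpos : 0 < M := lt_of_lt_of_le one_pos (le_max_left _ _)
      refine ⟨M⁻¹, by positivity, ?_⟩
      intro q hq hqd
      simp only [Set.mem_prod, Set.mem_Icc] at hq
      rw [hval]
      by_cases hc : q.1 < 1 ∧ 0 < q.2
      · have hsmall : q.2 * (1 - q.1) ≤ M⁻¹ := by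
          push_neg at h
          rcases lt_or_ge p.1 1 with hp1 | hp1
          · -- then p.2 ≤ 0, so p.2 = 0, and q.2 < M⁻¹
            have hp2 : p.2 = 0 := le_antisymm (h hp1) hp.2.1
            have : |q.2 - p.2| < M⁻¹ := lt_of_le_of_lt (le_max_right _ _) hqd
            rw [hp2, sub_zero, abs_of_pos hc.2] at this
            calc q.2 * (1 - q.1) ≤ q.2 * 1 := by
                  apply mul_le_mul_of_nonneg_left (by linarith [hq.1.1]) hc.2.le
              _ ≤ M⁻¹ := by linarith
          · -- p.1 = 1, so 1 - q.1 < M⁻¹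
            have hp1' : p.1 = 1 := le_antisymm hp.1.2 hp1
            have : |q.1 - p.1| < M⁻¹ := lt_of_le_of_lt (le_max_left _ _) hqd
            rw [hp1'] at this
            have h1 : 1 - q.1 < M⁻¹ := by
              rcases abs_lt.1 this with ⟨h2, _⟩; linarith
            calc q.2 * (1 - q.1) ≤ 1 * (1 - q.1) := by
                  apply mul_le_mul_of_nonneg_right hq.2.2 (by linarith [hc.1])
              _ ≤ M⁻¹ := by linarith
        have hpos : 0 < q.2 * (1 - q.1) := mul_pos hc.2 (by linarith [hc.1])
        rw [Real.dist_eq, wfun_dist_le hc.1 hc.2]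
        have hle : -(1 / (q.2 * (1 - q.1))) ≤ -M := by
          have : M ≤ 1 / (q.2 * (1 - q.1)) := by
            rw [le_div_iff₀ hpos]
            calc M * (q.2 * (1 - q.1)) ≤ M * M⁻¹ :=
              mul_le_mul_of_nonneg_left hsmall hMpos.le
              _ = 1 := mul_inv_cancel₀ (ne_of_gt hMpos)
          linarith
        calc Real.exp (-(1 / (q.2 * (1 - q.1)))) ≤ Real.exp (-M) := Real.exp_le_exp.2 hle
          _ ≤ Real.exp (-(Real.log (2 / ε))) := Real.exp_le_exp.2 (by
              have := le_max_right 1 (Real.log (2 / ε)); linarith)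
          _ = (2 / ε)⁻¹ := by rw [Real.exp_neg, Real.exp_log (by positivity)]
          _ = ε / 2 := by field_simp
          _ < ε := by linarith
      · rw [wfun, if_neg hc]
        simpa using hε
  · -- s_n → 1
    have := (tendsto_const_nhds : Tendsto (fun _ : ℕ => (1:ℝ)) atTop (nhds 1)).sub
      tendsto_one_div_atTop_nhds_zero_nat
    simpa using this
  · -- integrals tend to 0
    apply Tendsto.congr' _ tendsto_const_nhds
    filter_upwards [eventually_ge_atTop 1] with n hn
    have hs : (1 : ℝ) - 1 / n < 1 := by
      have : (0:ℝ) < 1 / n := by positivity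
      linarith
    symm
    have : ∀ t ∈ Set.uIoc (0:ℝ) 1, (⌊wfun (1 - 1 / (n : ℝ)) t⌋ : ℝ) = (0 : ℝ) := by
      intro t ht
      rw [Set.uIoc_of_le (by norm_num : (0:ℝ) ≤ 1)] at ht
      rw [wfun_floor_zero hs ht.1]
      norm_num
    rw [intervalIntegral.integral_congr_ae (MeasureTheory.ae_of_all _ this)]
    simp
  · -- integral at s = 1 equals 1
    have : ∀ t : ℝ, (⌊wfun 1 t⌋ : ℝ) = 1 := by
      intro t
      rw [wfun, if_neg (by simp)]
      norm_num
    simp only [this]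
    simp
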